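/- If Φ̄ ∈ C¹(ℝᴷ, ℝ) is strongly convex with parameter κ > 0 (i.e., ⟨x − y, ∇Φ̄(x) − ∇Φ̄(y)⟩ ≥ κ‖x − y‖² for all x, y) with minimiser θ*, then for λ = min(κ/α², 1/4) and all x: (x − θ*)·∇Φ̄(x)/2 ≥ λ(Φ̄(x) − Φ̄(θ*) + α²‖x − θ*‖²/4). -/

import Mathlib

open RealInnerProductSpace

/-- A strongly convex `C¹` function satisfies the structural Lyapunov assumption with
`λ = min (κ/α²) (1/4)`. -/
theorem stmt1 {K : ℕ} (Φ : EuclideanSpace ℝ (Fin K) → ℝ) (κ α : ℝ)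
    (hκ : 0 < κ) (hα : 0 < α)
    (hC1 : ContDiff ℝ 1 Φ)
    (hsc : ∀ x y : EuclideanSpace ℝ (Fin K),
      κ * ‖x - y‖ ^ 2 ≤ ⟪x - y, gradient Φ x - gradient Φ y⟫)
    (θs : EuclideanSpace ℝ (Fin K))
    (hmin : ∀ x, Φ θs ≤ Φ x) :
    ∀ x, min (κ / α ^ 2) (1 / 4) * (Φ x - Φ θs + α ^ 2 * ‖x - θs‖ ^ 2 / 4)
      ≤ ⟪x - θs, gradient Φ x⟫ / 2 := by
  have hdiff : Differentiable ℝ Φ := hC1.differentiable one_ne_zero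
  have hθ : gradient Φ θs = 0 := by
    have hloc : IsLocalMin Φ θs := Filter.Eventually.of_forall hmin
    have h0 : fderiv ℝ Φ θs = 0 := hloc.fderiv_eq_zero
    simp [gradient, h0]
  have key : ∀ x, Φ x - Φ θs ≤ ⟪x - θs, gradient Φ x⟫ := by
    intro x
    set v := x - θs with hv
    have hline : ∀ t : ℝ, HasDerivAt (fun t : ℝ => Φ (θs + t • v))
        ⟪gradient Φ (θs + t • v), v⟫ t := by
      intro t
      have h1 : HasDerivAt (fun t : ℝ => θs + t • v) v t := by
        simpa using ((hasDerivAt_id t).smul_const v).const_add θs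
      have h2 := (hdiff (θs + t • v)).hasFDerivAt.comp_hasDerivAt t h1
      have h3 : fderiv ℝ Φ (θs + t • v) v = ⟪gradient Φ (θs + t • v), v⟫ := by
        rw [← InnerProductSpace.toDual_apply_apply]
        simp [gradient]
      rw [← h3]; exact h2
    obtain ⟨c, hc, hceq⟩ := exists_hasDerivAt_eq_slope
        (fun t : ℝ => Φ (θs + t • v)) _ one_pos
        (fun t _ => ((hline t).continuousAt).continuousWithinAt)
        (fun t _ => hline t)
    have hx1 : θs + (1 : ℝ) • v = x := by simp [hv]
    have hx0 : θs + (0 : ℝ) • v = θs := by simp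
    rw [hx1, hx0] at hceq
    have hceq' : ⟪gradient Φ (θs + c • v), v⟫ = Φ x - Φ θs := by
      rw [hceq]; norm_num
    -- monotonicity of gradient gives the bound at the intermediate point
    have hmono := hsc x (θs + c • v)
    have hxc : x - (θs + c • v) = (1 - c) • v := by
      rw [hv]; module
    rw [hxc] at hmono
    have hinner : ⟪(1 - c) • v, gradient Φ x - gradient Φ (θs + c • v)⟫
        = (1 - c) * (⟪v, gradient Φ x⟫ - ⟪v, gradient Φ (θs + c • v)⟫) := by
      rw [real_inner_smul_left, inner_sub_right]
    rw [hinner] at hmono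
    have h1c : 0 < 1 - c := by linarith [hc.2]
    have hnn : 0 ≤ κ * ‖(1 - c) • v‖ ^ 2 := by positivity
    have hcomm : ⟪gradient Φ (θs + c • v), v⟫ = ⟪v, gradient Φ (θs + c • v)⟫ :=
      real_inner_comm _ _
    nlinarith [hceq', hmono, hnn, hcomm]
  intro x
  have hsx := hsc x θs
  rw [hθ, sub_zero] at hsx
  have hgap := key x
  have hD : 0 ≤ Φ x - Φ θs := by linarith [hmin x]
  have hn : (0 : ℝ) ≤ ‖x - θs‖ ^ 2 := by positivity
  set g := ⟪x - θs, gradient Φ x⟫ with hg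
  set lam := min (κ / α ^ 2) (1 / 4) with hlam
  have hl4 : lam ≤ 1 / 4 := min_le_right _ _
  have hlκ : lam * α ^ 2 ≤ κ := by
    have h1 : lam ≤ κ / α ^ 2 := min_le_left _ _
    have hα2 : (0 : ℝ) < α ^ 2 := by positivity
    calc lam * α ^ 2 ≤ (κ / α ^ 2) * α ^ 2 := by nlinarith
      _ = κ := by field_simp
  have hlnn : 0 ≤ lam := le_min (by positivity) (by norm_num)
  nlinarith [hsx, hgap, hD, hn, hl4, hlκ, hlnn, mul_nonneg hlnn hn]
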